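/- Let A be an anti-commutative CB-algebra over a field F and let I be a two-sided ideal of A. Then the quotient algebra A/I is again an anti-commutative CB-algebra. -/
import Mathlib


/-- The quotient of an anti-commutative CB-algebra by a two-sided ideal is
again an anti-commutative CB-algebra. -/
theorem stmt_3 (F : Type*) [Field F] (A : Type*) [AddCommGroup A] [Module F A]
    (mul : A →ₗ[F] A →ₗ[F] A)
    (hac : ∀ x : A, mul x x = 0)
    (hcb : ∀ x y : A, mul x y = 0 → ∀ z : A, mul (mul x z) y = 0)
    (I : Submodule F A)
    (hI : ∀ y ∈ I, ∀ a : A, mul y a ∈ I ∧ mul a y ∈ I)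
    (mulQ : (A ⧸ I) →ₗ[F] (A ⧸ I) →ₗ[F] (A ⧸ I))
    (hmulQ : ∀ x y : A, mulQ (Submodule.Quotient.mk x) (Submodule.Quotient.mk y)
        = Submodule.Quotient.mk (mul x y)) :
    (∀ p : A ⧸ I, mulQ p p = 0) ∧
      (∀ p q : A ⧸ I, mulQ p q = 0 → ∀ r : A ⧸ I, mulQ (mulQ p r) q = 0) := by
  -- anti-commutativity polarized
  have hanti : ∀ x y : A, mul x y = - mul y x := by
    intro x y
    have h := hac (x + y)
    simp only [map_add, LinearMap.add_apply, hac] at h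
    simp only [zero_add, add_zero] at h
    exact eq_neg_of_add_eq_zero_right h
  -- the identity (x·z)·y + (y·z)·x = 0
  have hE : ∀ x y z : A, mul (mul x z) y + mul (mul y z) x = 0 := by
    intro x y z
    have h0 : ∀ a : A, mul (mul a z) a = 0 := fun a => hcb a a (hac a) z
    have h := h0 (x + y)
    simp only [map_add, LinearMap.add_apply, h0] at h
    -- h : mul (mul y z) x + mul (mul x z) y = 0
    abel_nf at h ⊢
    exact h
  -- the key identity (x·z)·y = -(x·y)·z
  have hkey : ∀ x y z : A, mul (mul x z) y = - mul (mul x y) z := by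
    intro x y z
    have h1 := hE x y z
    have h2 := hE x z y
    have h3 : mul (mul y z) x = - mul (mul z y) x := by
      rw [hanti y z]; simp
    rw [h3] at h1
    have hc : mul (mul x z) y = mul (mul z y) x := by rwa [add_neg_eq_zero] at h1
    rw [hc]
    exact eq_neg_of_add_eq_zero_right h2
  constructor
  · intro p
    obtain ⟨x, rfl⟩ := Submodule.Quotient.mk_surjective I p
    rw [hmulQ, hac]
    simp
  · intro p q hpq r
    obtain ⟨x, rfl⟩ := Submodule.Quotient.mk_surjective I p
    obtain ⟨y, rfl⟩ := Submodule.Quotient.mk_surjective I q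
    obtain ⟨z, rfl⟩ := Submodule.Quotient.mk_surjective I r
    rw [hmulQ] at hpq
    rw [hmulQ, hmulQ]
    rw [Submodule.Quotient.mk_eq_zero] at hpq ⊢
    rw [hkey x y z]
    exact I.neg_mem (hI _ hpq z).1
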